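/- Let R be a reduced root system with positive system satisfying property # for a strongly orthogonal set A. Then R⁺_A is the disjoint union over α ∈ A of the sets R⁺_α = {β > 0 : s_α(β) < 0}. -/
import Mathlib


open scoped InnerProductSpace

variable {V : Type*} [NormedAddCommGroup V] [InnerProductSpace ℝ V]

/-- The (orthogonal) reflection in the root `α`: `s_α(v) = v - (2⟪v,α⟫/⟪α,α⟫)α`. -/
noncomputable def sRefl (α v : V) : V := v - (2 * ⟪v, α⟫_ℝ / ⟪α, α⟫_ℝ) • α

/-- The coroot of `α`, identified with a vector via the invariant inner product. -/
noncomputable def coroot (α : V) : V := (2 / ⟪α, α⟫_ℝ) • α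

/-- `S_A`: the product of the (commuting) reflections in the pairwise orthogonal
elements of `A`, given by its closed formula. -/
noncomputable def SRefl (A : Finset V) (v : V) : V :=
  v - ∑ α ∈ A, (2 * ⟪v, α⟫_ℝ / ⟪α, α⟫_ℝ) • α

/-- A (reduced) root system in `V`, with the ambient inner product Weyl-invariant. -/
structure IsRootSystem (R : Set V) : Prop where
  finite : R.Finite
  nonempty : R.Nonempty
  ne_zero : ∀ α ∈ R, α ≠ (0 : V)
  refl_mem : ∀ α ∈ R, ∀ β ∈ R, sRefl α β ∈ R
  integral : ∀ α ∈ R, ∀ β ∈ R, ∃ n : ℤ, 2 * ⟪β, α⟫_ℝ / ⟪α, α⟫_ℝ = (n : ℝ)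
  reduced : ∀ α ∈ R, ∀ t : ℝ, t • α ∈ R → t = 1 ∨ t = -1

/-- `α` and `β` are strongly orthogonal: neither their sum nor difference is a root. -/
def StronglyOrthogonal (R : Set V) (α β : V) : Prop := α + β ∉ R ∧ α - β ∉ R

/-- A strongly orthogonal subset of `R`. -/
def IsSOS (R A : Set V) : Prop := A ⊆ R ∧ A.Pairwise (StronglyOrthogonal R)

/-- A choice of positive roots in `R`. -/
structure IsPositiveSystem (R P : Set V) : Prop where
  subset : P ⊆ R
  mem_or_neg_mem : ∀ α ∈ R, α ∈ P ∨ -α ∈ P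
  not_both : ∀ α ∈ P, -α ∉ P
  add_mem : ∀ α ∈ P, ∀ β ∈ P, α + β ∈ R → α + β ∈ P

/-- Property `#(R,>,A)`: for distinct `α₁, α₂ ∈ A` and `β > 0`,
`s_{α₁}(β) < 0` implies `s_{α₂}(β) > 0`. -/
def PropSharp (P A : Set V) : Prop :=
  ∀ α₁ ∈ A, ∀ α₂ ∈ A, α₁ ≠ α₂ → ∀ β ∈ P, -(sRefl α₁ β) ∈ P → sRefl α₂ β ∈ P

/-- Property `##(R,>,A)`: for disjoint `A₁, A₂ ⊆ A` and `β > 0` with `S_{A₁}(β) < 0`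
one has `S_{A₂}(β) > 0` and `S_{A₁}S_{A₂}(β) < 0`. -/
def PropSharpSharp (P : Set V) (A : Finset V) : Prop :=
  ∀ A₁ ⊆ A, ∀ A₂ ⊆ A, Disjoint A₁ A₂ → ∀ β ∈ P, -(SRefl A₁ β) ∈ P →
    SRefl A₂ β ∈ P ∧ -(SRefl A₁ (SRefl A₂ β)) ∈ P

/-- `R⁺_B = {β : β > 0 ∧ S_B(β) < 0}`. -/
noncomputable def RPlus (P : Set V) (B : Finset V) : Set V :=
  {β | β ∈ P ∧ -(SRefl B β) ∈ P}
section AuxLemmas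

variable [DecidableEq V]

omit [DecidableEq V] in
lemma sRefl_negv (α v : V) : sRefl α (-v) = - sRefl α v := by
  simp only [sRefl, inner_neg_left]
  match_scalars <;> ring

omit [DecidableEq V] in
lemma sRefl_neg_root (α v : V) : sRefl (-α) v = sRefl α v := by
  simp only [sRefl, inner_neg_right, inner_neg_left, neg_neg]
  match_scalars <;> ring

omit [DecidableEq V] in
lemma sRefl_self (α : V) (h : α ≠ 0) : sRefl α α = -α := by
  have h2 : ⟪α,α⟫_ℝ ≠ 0 := (inner_self_ne_zero (𝕜 := ℝ)).mpr h
  rw [sRefl, mul_div_assoc, div_self h2]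
  match_scalars
  ring

omit [DecidableEq V] in
lemma inner_sRefl_left (γ v α : V) (h : ⟪γ, α⟫_ℝ = 0) :
    ⟪sRefl γ v, α⟫_ℝ = ⟪v, α⟫_ℝ := by
  simp [sRefl, inner_sub_left, real_inner_smul_left, h]

omit [DecidableEq V] in
lemma sRefl_invol (α v : V) (h : α ≠ 0) : sRefl α (sRefl α v) = v := by
  have h2 : ⟪α,α⟫_ℝ ≠ 0 := (inner_self_ne_zero (𝕜 := ℝ)).mpr h
  simp only [sRefl, inner_sub_left, real_inner_smul_left]
  match_scalars
  · ring
  · field_simp; ring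

omit [DecidableEq V] in
lemma sRefl_comm (α γ v : V) (h : ⟪α, γ⟫_ℝ = 0) :
    sRefl α (sRefl γ v) = sRefl γ (sRefl α v) := by
  have h' : ⟪γ, α⟫_ℝ = 0 := by rw [real_inner_comm]; exact h
  simp only [sRefl, inner_sub_left, real_inner_smul_left, h, h']
  match_scalars <;> ring

omit [DecidableEq V] in
lemma SRefl_empty (v : V) : SRefl ∅ v = v := by simp [SRefl]

omit [DecidableEq V] in
lemma SRefl_singleton (γ v : V) : SRefl {γ} v = sRefl γ v := by
  simp [SRefl, sRefl]

omit [DecidableEq V] in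
lemma inner_SRefl_left (B : Finset V) (v γ : V) (horth : ∀ x ∈ B, ⟪x, γ⟫_ℝ = 0) :
    ⟪SRefl B v, γ⟫_ℝ = ⟪v, γ⟫_ℝ := by
  rw [SRefl, inner_sub_left, sum_inner, Finset.sum_eq_zero, sub_zero]
  intro x hx
  rw [real_inner_smul_left, horth x hx, mul_zero]

lemma SRefl_insert (B : Finset V) (γ : V) (hγ : γ ∉ B)
    (horth : ∀ x ∈ B, ⟪x, γ⟫_ℝ = 0) (v : V) :
    SRefl (insert γ B) v = sRefl γ (SRefl B v) := by
  rw [sRefl, inner_SRefl_left B v γ horth, SRefl, SRefl, Finset.sum_insert hγ]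
  abel

lemma SRefl_insert' (B : Finset V) (γ : V) (hγ : γ ∉ B)
    (horth : ∀ x ∈ B, ⟪x, γ⟫_ℝ = 0) (v : V) :
    SRefl (insert γ B) v = SRefl B (sRefl γ v) := by
  have key : ∀ x ∈ B, (2 * ⟪sRefl γ v, x⟫_ℝ / ⟪x, x⟫_ℝ) • x
      = (2 * ⟪v, x⟫_ℝ / ⟪x, x⟫_ℝ) • x := fun x hx => by
    rw [inner_sRefl_left γ v x (by rw [real_inner_comm]; exact horth x hx)]
  rw [SRefl, SRefl, Finset.sum_insert hγ, Finset.sum_congr rfl key, sRefl]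
  abel

omit [DecidableEq V] in
lemma rs_neg_mem {R : Set V} (hR : IsRootSystem R) {w : V} (hw : w ∈ R) : -w ∈ R := by
  have := hR.refl_mem w hw w hw
  rwa [sRefl_self w (hR.ne_zero w hw)] at this

lemma SRefl_mem {R : Set V} (hR : IsRootSystem R) :
    ∀ (B : Finset V), (∀ x ∈ B, x ∈ R) →
    (∀ x ∈ B, ∀ y ∈ B, x ≠ y → ⟪x, y⟫_ℝ = 0) →
    ∀ β ∈ R, SRefl B β ∈ R := by
  intro B
  induction B using Finset.induction_on with
  | empty => intro _ _ β hβ; rwa [SRefl_empty]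
  | @insert γ B hγ ih =>
    intro hsub horth β hβ
    have hxB : ∀ x ∈ B, x ∈ R := fun x hx => hsub x (Finset.mem_insert_of_mem hx)
    have horthB : ∀ x ∈ B, ∀ y ∈ B, x ≠ y → ⟪x, y⟫_ℝ = 0 := fun x hx y hy =>
      horth x (Finset.mem_insert_of_mem hx) y (Finset.mem_insert_of_mem hy)
    have horthγ : ∀ x ∈ B, ⟪x, γ⟫_ℝ = 0 := fun x hx =>
      horth x (Finset.mem_insert_of_mem hx) γ (Finset.mem_insert_self γ B)
        (fun h => hγ (h ▸ hx))
    rw [SRefl_insert B γ hγ horthγ]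
    exact hR.refl_mem γ (hsub γ (Finset.mem_insert_self γ B)) _ (ih hxB horthB β hβ)

lemma SRefl_invol :
    ∀ (B : Finset V), (∀ x ∈ B, x ≠ (0:V)) →
    (∀ x ∈ B, ∀ y ∈ B, x ≠ y → ⟪x, y⟫_ℝ = 0) →
    ∀ v : V, SRefl B (SRefl B v) = v := by
  intro B
  induction B using Finset.induction_on with
  | empty => intro _ _ v; rw [SRefl_empty, SRefl_empty]
  | @insert γ B hγ ih =>
    intro hne horth v
    have hneB : ∀ x ∈ B, x ≠ (0:V) := fun x hx => hne x (Finset.mem_insert_of_mem hx)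
    have horthB : ∀ x ∈ B, ∀ y ∈ B, x ≠ y → ⟪x, y⟫_ℝ = 0 := fun x hx y hy =>
      horth x (Finset.mem_insert_of_mem hx) y (Finset.mem_insert_of_mem hy)
    have horthγ : ∀ x ∈ B, ⟪x, γ⟫_ℝ = 0 := fun x hx =>
      horth x (Finset.mem_insert_of_mem hx) γ (Finset.mem_insert_self γ B)
        (fun h => hγ (h ▸ hx))
    rw [SRefl_insert B γ hγ horthγ v,
        SRefl_insert' B γ hγ horthγ (sRefl γ (SRefl B v)),
        sRefl_invol γ (SRefl B v) (hne γ (Finset.mem_insert_self γ B)), ih hneB horthB]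

end AuxLemmas
lemma orthA (R P : Set V) (A : Finset V) (hR : IsRootSystem R)
    (hP : IsPositiveSystem R P) (hA : IsSOS R ↑A) (hsharp : PropSharp P ↑A) :
    ∀ x ∈ A, ∀ y ∈ A, x ≠ y → ⟪x, y⟫_ℝ = 0 := by
  intro α hα γ hγ hne
  by_contra hc
  have hαA : α ∈ (↑A : Set V) := Finset.mem_coe.mpr hα
  have hγA : γ ∈ (↑A : Set V) := Finset.mem_coe.mpr hγ
  have hαR : α ∈ R := hA.1 hαA
  have hγR : γ ∈ R := hA.1 hγA
  have hα0 : α ≠ 0 := hR.ne_zero α hαR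
  have hγ0 : γ ≠ 0 := hR.ne_zero γ hγR
  have ha : (0:ℝ) < ⟪α, α⟫_ℝ :=
    lt_of_le_of_ne real_inner_self_nonneg (Ne.symm ((inner_self_ne_zero (𝕜 := ℝ)).mpr hα0))
  have hg : (0:ℝ) < ⟪γ, γ⟫_ℝ :=
    lt_of_le_of_ne real_inner_self_nonneg (Ne.symm ((inner_self_ne_zero (𝕜 := ℝ)).mpr hγ0))
  obtain ⟨n, hn⟩ := hR.integral α hαR γ hγR
  obtain ⟨m, hm⟩ := hR.integral γ hγR α hαR
  have hcomm : ⟪γ, α⟫_ℝ = ⟪α, γ⟫_ℝ := real_inner_comm α γ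
  -- Cauchy–Schwarz
  have hCS : ⟪α, γ⟫_ℝ * ⟪α, γ⟫_ℝ ≤ ⟪α, α⟫_ℝ * ⟪γ, γ⟫_ℝ := real_inner_mul_inner_self_le α γ
  rcases eq_or_lt_of_le hCS with hEq | hLt
  · -- equality case: γ = ±α
    have hz : γ - (⟪α, γ⟫_ℝ / ⟪α, α⟫_ℝ) • α = 0 := by
      rw [← (inner_self_eq_zero (𝕜 := ℝ))]
      simp only [inner_sub_left, inner_sub_right, real_inner_smul_left, real_inner_smul_right]
      rw [hcomm]
      field_simp
      nlinarith [hEq]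
    have hγt : γ = (⟪α, γ⟫_ℝ / ⟪α, α⟫_ℝ) • α := by
      have := sub_eq_zero.mp hz
      exact this
    have htR : (⟪α, γ⟫_ℝ / ⟪α, α⟫_ℝ) • α ∈ R := hγt ▸ hγR
    rcases hR.reduced α hαR _ htR with ht | ht
    · refine absurd ?_ hne.symm
      rw [hγt, ht, one_smul]
    · -- γ = -α : contradiction with PropSharp
      have hγeq : γ = -α := by rw [hγt, ht, neg_one_smul]
      rcases hP.mem_or_neg_mem α hαR with hp | hp
      · have h1 : -(sRefl α α) ∈ P := by rw [sRefl_self α hα0, neg_neg]; exact hp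
        have h2 := hsharp α hαA γ hγA hne α hp h1
        rw [hγeq, sRefl_neg_root, sRefl_self α hα0] at h2
        exact hP.not_both α hp h2
      · have h1 : -(sRefl α (-α)) ∈ P := by
          rw [sRefl_negv, sRefl_self α hα0, neg_neg]; exact hp
        have h2 := hsharp α hαA γ hγA hne (-α) hp h1
        rw [hγeq, sRefl_neg_root, sRefl_negv, sRefl_self α hα0, neg_neg] at h2
        exact hP.not_both (-α) hp (by rwa [neg_neg])
  · -- strict case : n*m ∈ {1,2,3}
    have hso := hA.2 hαA hγA hne
    have hnm_pos : (0:ℝ) < (n:ℝ) * (m:ℝ) := by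
      rw [← hn, ← hm, hcomm]
      have : 2 * ⟪α, γ⟫_ℝ / ⟪α, α⟫_ℝ * (2 * ⟪α, γ⟫_ℝ / ⟪γ, γ⟫_ℝ)
          = 4 * (⟪α, γ⟫_ℝ * ⟪α, γ⟫_ℝ) / (⟪α, α⟫_ℝ * ⟪γ, γ⟫_ℝ) := by
        field_simp; ring
      rw [this]
      exact div_pos (by nlinarith [mul_self_pos.mpr hc]) (mul_pos ha hg)
    have hnm_lt : (n:ℝ) * (m:ℝ) < 4 := by
      rw [← hn, ← hm, hcomm]
      have h4 : 2 * ⟪α, γ⟫_ℝ / ⟪α, α⟫_ℝ * (2 * ⟪α, γ⟫_ℝ / ⟪γ, γ⟫_ℝ)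
          = 4 * (⟪α, γ⟫_ℝ * ⟪α, γ⟫_ℝ) / (⟪α, α⟫_ℝ * ⟪γ, γ⟫_ℝ) := by
        field_simp; ring
      rw [h4, div_lt_iff₀ (by positivity)]
      nlinarith [hLt]
    have hnmZ_pos : 0 < n * m := by exact_mod_cast (by push_cast; exact hnm_pos : (0:ℝ) < ((n*m : ℤ) : ℝ))
    have hnmZ_lt : n * m < 4 := by exact_mod_cast (by push_cast; exact hnm_lt : ((n*m : ℤ) : ℝ) < 4)
    -- one of |n|, |m| equals 1
    have hcases : n = 1 ∨ n = -1 ∨ m = 1 ∨ m = -1 := by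
      by_contra hh
      push_neg at hh
      obtain ⟨h1, h2, h3, h4⟩ := hh
      have hn0 : n ≠ 0 := by
        intro h; rw [h] at hnmZ_pos; simp at hnmZ_pos
      have hm0 : m ≠ 0 := by
        intro h; rw [h] at hnmZ_pos; simp at hnmZ_pos
      have hn2 : 2 ≤ n ∨ n ≤ -2 := by omega
      have hm2 : 2 ≤ m ∨ m ≤ -2 := by omega
      rcases hn2 with h5 | h5 <;> rcases hm2 with h6 | h6 <;> nlinarith
    have hsαγ : sRefl α γ = γ - (n:ℝ) • α := by rw [sRefl, hn]
    have hsγα : sRefl γ α = α - (m:ℝ) • γ := by rw [sRefl, hm]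
    rcases hcases with h | h | h | h
    · have : γ - α ∈ R := by
        have := hR.refl_mem α hαR γ hγR
        rwa [hsαγ, h, Int.cast_one, one_smul] at this
      exact hso.2 (by rw [show α - γ = -(γ - α) by abel]; exact rs_neg_mem hR this)
    · have : γ + α ∈ R := by
        have := hR.refl_mem α hαR γ hγR
        rwa [hsαγ, h, Int.cast_neg, Int.cast_one, neg_one_smul, sub_neg_eq_add] at this
      exact hso.1 (by rwa [add_comm])
    · have : α - γ ∈ R := by
        have := hR.refl_mem γ hγR α hαR
        rwa [hsγα, h, Int.cast_one, one_smul] at this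
      exact hso.2 this
    · have : α + γ ∈ R := by
        have := hR.refl_mem γ hγR α hαR
        rwa [hsγα, h, Int.cast_neg, Int.cast_one, neg_one_smul, sub_neg_eq_add] at this
      exact hso.1 this
lemma keyLemma (R P : Set V) (A : Finset V) [DecidableEq V] (hR : IsRootSystem R)
    (hP : IsPositiveSystem R P) (hAR : ∀ x ∈ A, x ∈ R)
    (horthA : ∀ x ∈ A, ∀ y ∈ A, x ≠ y → ⟪x, y⟫_ℝ = 0)
    (hsharp : PropSharp P ↑A) :
    ∀ B : Finset V, B ⊆ A → ∀ α ∈ A, α ∉ B → ∀ β ∈ R, β ∈ P → -(sRefl α β) ∈ P →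
      SRefl B β ∈ P ∧ -(sRefl α (SRefl B β)) ∈ P := by
  intro B
  induction B using Finset.induction_on with
  | empty =>
    intro _ α hα _ β hβR hβP hsneg
    rw [SRefl_empty]
    exact ⟨hβP, hsneg⟩
  | @insert γ B hγB ih =>
    intro hsub α hαA hαnotin β hβR hβP hsneg
    have hγA : γ ∈ A := hsub (Finset.mem_insert_self γ B)
    have hBA : B ⊆ A := (Finset.subset_insert γ B).trans hsub
    have hαγ : α ≠ γ := fun h => hαnotin (h ▸ Finset.mem_insert_self γ B)
    have hαB : α ∉ B := fun h => hαnotin (Finset.mem_insert_of_mem h)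
    obtain ⟨h1, h2⟩ := ih hBA α hαA hαB β hβR hβP hsneg
    have hBR : ∀ x ∈ B, x ∈ R := fun x hx => hAR x (hBA hx)
    have horthB : ∀ x ∈ B, ∀ y ∈ B, x ≠ y → ⟪x, y⟫_ℝ = 0 := fun x hx y hy =>
      horthA x (hBA hx) y (hBA hy)
    have horthγ : ∀ x ∈ B, ⟪x, γ⟫_ℝ = 0 := fun x hx =>
      horthA x (hBA hx) γ hγA (fun h => hγB (h ▸ hx))
    have hδR : SRefl B β ∈ R := SRefl_mem hR B hBR horthB β hβR
    have hα0 : α ≠ 0 := hR.ne_zero α (hAR α hαA)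
    have hαAs : α ∈ (↑A : Set V) := Finset.mem_coe.mpr hαA
    have hγAs : γ ∈ (↑A : Set V) := Finset.mem_coe.mpr hγA
    have hsγδ : sRefl γ (SRefl B β) ∈ P := hsharp α hαAs γ hγAs hαγ (SRefl B β) h1 h2
    constructor
    · rw [SRefl_insert B γ hγB horthγ]
      exact hsγδ
    · have h3 : -(sRefl α (-(sRefl α (SRefl B β)))) ∈ P := by
        rw [sRefl_negv, sRefl_invol α _ hα0, neg_neg]; exact h1
      have h4 : sRefl γ (-(sRefl α (SRefl B β))) ∈ P :=
        hsharp α hαAs γ hγAs hαγ _ h2 h3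
      rw [SRefl_insert B γ hγB horthγ,
          sRefl_comm α γ (SRefl B β) (horthA α hαA γ hγA hαγ), ← sRefl_negv]
      exact h4

lemma allPos (R P : Set V) (A : Finset V) [DecidableEq V] (hR : IsRootSystem R)
    (hP : IsPositiveSystem R P) (hAR : ∀ x ∈ A, x ∈ R)
    (horthA : ∀ x ∈ A, ∀ y ∈ A, x ≠ y → ⟪x, y⟫_ℝ = 0)
    (hsharp : PropSharp P ↑A) (β : V) (hβR : β ∈ R) (hβP : β ∈ P)
    (hall : ∀ α ∈ A, sRefl α β ∈ P) :
    ∀ B : Finset V, B ⊆ A → SRefl B β ∈ P := by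
  intro B
  induction B using Finset.induction_on with
  | empty => intro _; rwa [SRefl_empty]
  | @insert γ B hγB ih =>
    intro hsub
    have hγA : γ ∈ A := hsub (Finset.mem_insert_self γ B)
    have hBA : B ⊆ A := (Finset.subset_insert γ B).trans hsub
    have hBR : ∀ x ∈ B, x ∈ R := fun x hx => hAR x (hBA hx)
    have horthB : ∀ x ∈ B, ∀ y ∈ B, x ≠ y → ⟪x, y⟫_ℝ = 0 := fun x hx y hy =>
      horthA x (hBA hx) y (hBA hy)
    have hneB : ∀ x ∈ B, x ≠ (0:V) := fun x hx => hR.ne_zero x (hBR x hx)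
    have horthγ : ∀ x ∈ B, ⟪x, γ⟫_ℝ = 0 := fun x hx =>
      horthA x (hBA hx) γ hγA (fun h => hγB (h ▸ hx))
    have hδP : SRefl B β ∈ P := ih hBA
    have hδR : SRefl B β ∈ R := SRefl_mem hR B hBR horthB β hβR
    rw [SRefl_insert B γ hγB horthγ]
    by_contra hcon
    have hneg : -(sRefl γ (SRefl B β)) ∈ P := by
      rcases hP.mem_or_neg_mem _ (hR.refl_mem γ (hAR γ hγA) _ hδR) with h | h
      · exact absurd h hcon
      · exact h
    obtain ⟨_, h2⟩ := keyLemma R P A hR hP hAR horthA hsharp B hBA γ hγA hγB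
      (SRefl B β) hδR hδP hneg
    rw [SRefl_invol B hneB horthB β] at h2
    exact hP.not_both _ (hall γ hγA) h2

/-- Under property `#`, `R⁺_A` is the disjoint union over `α ∈ A` of the sets
`R⁺_α = {β > 0 : s_α(β) < 0}`. -/
theorem statement8 (R P : Set V) (A : Finset V) (hR : IsRootSystem R)
    (hP : IsPositiveSystem R P) (hA : IsSOS R ↑A) (hsharp : PropSharp P ↑A) :
    RPlus P A = (⋃ α ∈ A, RPlus P {α}) ∧
      (↑A : Set V).Pairwise (fun α γ => Disjoint (RPlus P {α}) (RPlus P {γ})) := by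
  classical
  have hAR : ∀ x ∈ A, x ∈ R := fun x hx => hA.1 (Finset.mem_coe.mpr hx)
  have horthA := orthA R P A hR hP hA hsharp
  constructor
  · ext β
    simp only [RPlus, Set.mem_setOf_eq, Set.mem_iUnion, exists_prop]
    constructor
    · rintro ⟨hβP, hneg⟩
      have hβR : β ∈ R := hP.subset hβP
      by_contra hcon
      push_neg at hcon
      have hall : ∀ α ∈ A, sRefl α β ∈ P := by
        intro α hα
        rcases hP.mem_or_neg_mem _ (hR.refl_mem α (hAR α hα) β hβR) with h | h
        · exact h
        · exact absurd (by rwa [SRefl_singleton] :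
            -(SRefl {α} β) ∈ P) (hcon α hα hβP)
      have hfin := allPos R P A hR hP hAR horthA hsharp β hβR hβP hall A subset_rfl
      exact hP.not_both _ hfin hneg
    · rintro ⟨α, hα, hβP, hneg⟩
      have hβR : β ∈ R := hP.subset hβP
      rw [SRefl_singleton] at hneg
      refine ⟨hβP, ?_⟩
      have horthE : ∀ x ∈ A.erase α, ⟪x, α⟫_ℝ = 0 := fun x hx =>
        horthA x (Finset.mem_of_mem_erase hx) α hα (Finset.ne_of_mem_erase hx)
      obtain ⟨h1, h2⟩ := keyLemma R P A hR hP hAR horthA hsharp (A.erase α)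
        (Finset.erase_subset α A) α hα (Finset.notMem_erase α A) β hβR hβP hneg
      have hrw : SRefl A β = sRefl α (SRefl (A.erase α) β) := by
        conv_lhs => rw [← Finset.insert_erase hα]
        exact SRefl_insert (A.erase α) α (Finset.notMem_erase α A) horthE β
      rw [hrw]
      exact h2
  · intro α hα γ hγ hne
    rw [Set.disjoint_left]
    rintro β ⟨hβP, h1⟩ ⟨_, h2⟩
    rw [SRefl_singleton] at h1 h2
    have := hsharp α hα γ hγ hne β hβP h1
    exact hP.not_both _ this h2
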